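/- arXiv:1811.06483 — 3 statements merged into one kernel-verified Lean document; each statement's English description precedes it below -/
import Mathlib

section
/- Let H be a real inner product space and A ⊆ H. Then (for every finite sequence of vectors taken from A, the norm of every partial-sum prefix obtained by deleting the last term is at most the norm of the full sum) if and only if ⟨a,b⟩ ≥ 0 for all a,b ∈ A. Formally: (∀ n, ∀ f : Fin (n+1) → A, ‖∑_{i<n} f(i)‖ ≤ ‖∑_{i<n+1} f(i)‖) ↔ (∀ a b ∈ A, ⟨a,b⟩ ≥ 0). -/
open scoped RealInnerProductSpace

theorem stmt2 {H : Type*} [NormedAddCommGroup H] [InnerProductSpace ℝ H]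
    (A : Set H) :
    (∀ (n : ℕ) (f : Fin (n + 1) → H), (∀ i, f i ∈ A) →
      ‖∑ i : Fin n, f i.castSucc‖ ≤ ‖∑ i : Fin (n + 1), f i‖) ↔
    (∀ a ∈ A, ∀ b ∈ A, 0 ≤ ⟪a, b⟫) := by
  constructor
  · intro h a ha b hb
    by_contra hneg
    push_neg at hneg
    obtain ⟨n, hn⟩ := exists_nat_gt (‖b‖ ^ 2 / (2 * (-⟪a, b⟫)))
    have hpos : 0 < 2 * (-⟪a, b⟫) := by linarith
    have hn' : ‖b‖ ^ 2 < n * (2 * (-⟪a, b⟫)) := by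
      rwa [div_lt_iff₀ hpos] at hn
    have key := h n (fun i => if i = Fin.last n then b else a)
      (fun i => by by_cases hi : i = Fin.last n <;> simp [hi, ha, hb])
    have h1 : (∑ i : Fin n, (if (i.castSucc : Fin (n+1)) = Fin.last n then b else a))
        = (n : ℕ) • a := by
      rw [Finset.sum_congr rfl (fun i _ => if_neg (Fin.castSucc_lt_last i).ne)]
      simp
    have h2 : (∑ i : Fin (n+1), (if i = Fin.last n then b else a))
        = (n : ℕ) • a + b := by
      rw [Fin.sum_univ_castSucc]
      rw [Finset.sum_congr rfl (fun i _ => if_neg (Fin.castSucc_lt_last i).ne)]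
      simp
    rw [h1, h2] at key
    have hsq : ‖(n : ℕ) • a‖ ^ 2 ≤ ‖(n : ℕ) • a + b‖ ^ 2 := by
      exact pow_le_pow_left₀ (norm_nonneg _) key 2
    rw [@norm_add_sq_real] at hsq
    have hin : ⟪(n : ℕ) • a, b⟫ = (n : ℝ) * ⟪a, b⟫ := by
      rw [← Nat.cast_smul_eq_nsmul ℝ, real_inner_smul_left]
    rw [hin] at hsq
    nlinarith
  · intro h n f hf
    have hsum : (∑ i : Fin (n+1), f i) = (∑ i : Fin n, f i.castSucc) + f (Fin.last n) :=
      Fin.sum_univ_castSucc f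
    have hin : 0 ≤ ⟪∑ i : Fin n, f i.castSucc, f (Fin.last n)⟫ := by
      rw [sum_inner]
      exact Finset.sum_nonneg fun i _ => h _ (hf _) _ (hf _)
    have hsq : ‖∑ i : Fin n, f i.castSucc‖ ^ 2 ≤ ‖∑ i : Fin (n+1), f i‖ ^ 2 := by
      rw [hsum, norm_add_sq_real]
      nlinarith [sq_nonneg ‖f (Fin.last n)‖]
    nlinarith [norm_nonneg (∑ i : Fin n, f i.castSucc), norm_nonneg (∑ i : Fin (n+1), f i)]
end

section
/- Let A = {ξ₁, -ξ₁, ξ₂, -ξ₂, ..., ξ_k, -ξ_k} ⊆ ℝ^k, where ξᵢ are the standard basis vectors. There exists δ > 0 such that every compact set K ⊆ ℝ^k with Hausdorff distance less than δ from A is strongly positively dependent. -/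
/-- The convex cone generated by a set: all finite linear combinations of
elements of the set with nonnegative coefficients. -/
def convCone {E : Type*} [AddCommMonoid E] [Module ℝ E] (A : Set E) : Set E :=
  {x | ∃ (n : ℕ) (c : Fin n → ℝ) (v : Fin n → E),
    (∀ i, 0 ≤ c i) ∧ (∀ i, v i ∈ A) ∧ x = ∑ i, c i • v i}

lemma convCone_zero {E : Type*} [AddCommMonoid E] [Module ℝ E] (A : Set E) :
    (0 : E) ∈ convCone A :=
  ⟨0, fun i => 0, fun i => i.elim0, fun i => le_refl _, fun i => i.elim0, by simp⟩

lemma convCone_add {E : Type*} [AddCommMonoid E] [Module ℝ E] {A : Set E} {x y : E}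
    (hx : x ∈ convCone A) (hy : y ∈ convCone A) : x + y ∈ convCone A := by
  obtain ⟨n, c, v, hc, hv, rfl⟩ := hx
  obtain ⟨m, d, w, hd, hw, rfl⟩ := hy
  refine ⟨n + m, Fin.addCases c d, Fin.addCases v w, ?_, ?_, ?_⟩
  · intro i
    refine Fin.addCases (fun j => ?_) (fun j => ?_) i <;> simp [hc, hd]
  · intro i
    refine Fin.addCases (fun j => ?_) (fun j => ?_) i <;> simp [hv, hw]
  · rw [Fin.sum_univ_add]
    simp

lemma convCone_smul_mem {E : Type*} [AddCommMonoid E] [Module ℝ E] {A : Set E} {x : E}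
    (hx : x ∈ A) {c : ℝ} (hc : 0 ≤ c) : c • x ∈ convCone A :=
  ⟨1, fun _ => c, fun _ => x, fun _ => hc, fun _ => hx, by simp⟩

lemma convCone_sum {E : Type*} [AddCommMonoid E] [Module ℝ E] {A : Set E} {ι : Type*}
    (s : Finset ι) (f : ι → E) (hf : ∀ i ∈ s, f i ∈ convCone A) :
    ∑ i ∈ s, f i ∈ convCone A := by
  classical
  induction s using Finset.induction with
  | empty => simpa using convCone_zero A
  | @insert a s hns ih =>
    rw [Finset.sum_insert hns]
    exact convCone_add (hf _ (Finset.mem_insert_self _ _))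
      (ih fun i hi => hf _ (Finset.mem_insert_of_mem hi))

lemma l1_le_sqrt_mul_norm (k : ℕ) (y : EuclideanSpace ℝ (Fin k)) :
    ∑ i, |y i| ≤ Real.sqrt k * ‖y‖ := by
  have h := Finset.sum_mul_sq_le_sq_mul_sq Finset.univ (fun _ : Fin k => (1 : ℝ))
    (fun i => |y i|)
  simp only [one_mul, one_pow, Finset.sum_const, Finset.card_univ, Fintype.card_fin,
    nsmul_eq_mul, mul_one] at h
  have h1 : ∑ i, |y i| = Real.sqrt ((∑ i, |y i|) ^ 2) := by
    rw [Real.sqrt_sq (Finset.sum_nonneg fun i _ => abs_nonneg _)]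
  rw [h1]
  have h2 : ‖y‖ = Real.sqrt (∑ i, (y i) ^ 2) := by
    rw [EuclideanSpace.norm_eq]
    congr 1
    exact Finset.sum_congr rfl fun i _ => by rw [Real.norm_eq_abs, sq_abs]
  rw [h2, ← Real.sqrt_mul (Nat.cast_nonneg k)]
  apply Real.sqrt_le_sqrt
  calc (∑ i, |y i|) ^ 2 ≤ (k : ℝ) * ∑ i, |y i| ^ 2 := h
    _ = (k : ℝ) * ∑ i, (y i) ^ 2 := by
        congr 1; exact Finset.sum_congr rfl fun i _ => sq_abs _

theorem stmt8 (k : ℕ) (hk : 0 < k)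
    (A : Set (EuclideanSpace ℝ (Fin k)))
    (hA : A = {x | ∃ i : Fin k, x = EuclideanSpace.single i (1 : ℝ) ∨
      x = -EuclideanSpace.single i (1 : ℝ)}) :
    ∃ δ > (0 : ℝ), ∀ K : Set (EuclideanSpace ℝ (Fin k)), IsCompact K →
      Metric.hausdorffDist K A < δ →
      ∀ x ∈ K, -x ∈ closure (convCone K) := by
  have hsk : (0 : ℝ) < Real.sqrt k := Real.sqrt_pos.2 (by exact_mod_cast hk)
  refine ⟨1 / (2 * Real.sqrt k), by positivity, ?_⟩
  intro K hK hKA x hxK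
  -- A is bounded and nonempty, K is nonempty, so hausdorffEdist ≠ ⊤
  have hAb : Bornology.IsBounded A := by
    apply (Metric.isBounded_closedBall (x := (0 : EuclideanSpace ℝ (Fin k))) (r := 1)).subset
    rw [hA]
    rintro z ⟨i, hz | hz⟩ <;>
      simp [hz, Metric.mem_closedBall, dist_zero_right, EuclideanSpace.norm_single]
  have hAne : A.Nonempty := by
    rw [hA]
    exact ⟨EuclideanSpace.single ⟨0, hk⟩ 1, ⟨0, hk⟩, Or.inl rfl⟩
  have hfin : EMetric.hausdorffEdist K A ≠ ⊤ :=
    Metric.hausdorffEdist_ne_top_of_nonempty_of_bounded ⟨x, hxK⟩ hAne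
      hK.isBounded hAb
  -- pick points of K near each ±eᵢ
  have hu : ∀ i : Fin k, ∃ u ∈ K,
      dist u (EuclideanSpace.single i (1 : ℝ)) < 1 / (2 * Real.sqrt k) := by
    intro i
    exact Metric.exists_dist_lt_of_hausdorffDist_lt' (by rw [hA]; exact ⟨i, Or.inl rfl⟩)
      hKA hfin
  have hw : ∀ i : Fin k, ∃ w ∈ K,
      dist w (-EuclideanSpace.single i (1 : ℝ)) < 1 / (2 * Real.sqrt k) := by
    intro i
    exact Metric.exists_dist_lt_of_hausdorffDist_lt' (by rw [hA]; exact ⟨i, Or.inr rfl⟩)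
      hKA hfin
  choose u huK hud using hu
  choose w hwK hwd using hw
  -- key step: every y is approximated within ‖y‖/2 by a cone element
  have step : ∀ y : EuclideanSpace ℝ (Fin k), ∃ z ∈ convCone K, ‖y - z‖ ≤ ‖y‖ / 2 := by
    intro y
    set c : Fin k → ℝ := fun i => max (y i) 0 with hc
    set d : Fin k → ℝ := fun i => max (-(y i)) 0 with hd
    refine ⟨∑ i, (c i • u i + d i • w i), ?_, ?_⟩
    · apply convCone_sum
      intro i _
      exact convCone_add (convCone_smul_mem (huK i) (le_max_right _ _))
        (convCone_smul_mem (hwK i) (le_max_right _ _))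
    · have hyrepr : y = ∑ i, y i • (EuclideanSpace.single i (1 : ℝ) : EuclideanSpace ℝ (Fin k)) := by
        have := (EuclideanSpace.basisFun (Fin k) ℝ).sum_repr y
        simp only [EuclideanSpace.basisFun_apply, EuclideanSpace.basisFun_repr] at this
        exact this.symm
      have hdiff : y - ∑ i, (c i • u i + d i • w i) =
          ∑ i, (c i • (EuclideanSpace.single i (1 : ℝ) - u i)
            + d i • (-(EuclideanSpace.single i (1 : ℝ)) - w i)) := by
        rw [hyrepr]
        rw [← Finset.sum_sub_distrib]
        apply Finset.sum_congr rfl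
        intro i _
        have hcd : y i = c i - d i := by
          simp only [hc, hd]
          rcases le_or_gt 0 (y i) with h | h
          · rw [max_eq_left h, max_eq_right (by linarith)]; ring
          · rw [max_eq_right (by linarith), max_eq_left (by linarith)]; ring
        rw [hcd]
        simp only [smul_sub, smul_neg, sub_smul]
        abel
      rw [hdiff]
      calc ‖∑ i, (c i • (EuclideanSpace.single i (1 : ℝ) - u i)
            + d i • (-(EuclideanSpace.single i (1 : ℝ)) - w i))‖
          ≤ ∑ i, ‖c i • (EuclideanSpace.single i (1 : ℝ) - u i)
            + d i • (-(EuclideanSpace.single i (1 : ℝ)) - w i)‖ :=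
            norm_sum_le _ _
        _ ≤ ∑ i, (c i + d i) * (1 / (2 * Real.sqrt k)) := by
            apply Finset.sum_le_sum
            intro i _
            have h1 : ‖c i • (EuclideanSpace.single i (1 : ℝ) - u i)‖
                ≤ c i * (1 / (2 * Real.sqrt k)) := by
              rw [norm_smul, Real.norm_eq_abs, abs_of_nonneg (le_max_right _ _)]
              apply mul_le_mul_of_nonneg_left _ (le_max_right _ _)
              rw [← dist_eq_norm, dist_comm]
              exact le_of_lt (hud i)
            have h2 : ‖d i • (-(EuclideanSpace.single i (1 : ℝ)) - w i)‖
                ≤ d i * (1 / (2 * Real.sqrt k)) := by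
              rw [norm_smul, Real.norm_eq_abs, abs_of_nonneg (le_max_right _ _)]
              apply mul_le_mul_of_nonneg_left _ (le_max_right _ _)
              rw [← dist_eq_norm, dist_comm]
              exact le_of_lt (hwd i)
            calc ‖c i • (EuclideanSpace.single i (1 : ℝ) - u i)
                + d i • (-(EuclideanSpace.single i (1 : ℝ)) - w i)‖
                ≤ ‖c i • (EuclideanSpace.single i (1 : ℝ) - u i)‖
                  + ‖d i • (-(EuclideanSpace.single i (1 : ℝ)) - w i)‖ := norm_add_le _ _
              _ ≤ c i * (1 / (2 * Real.sqrt k)) + d i * (1 / (2 * Real.sqrt k)) :=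
                  add_le_add h1 h2
              _ = (c i + d i) * (1 / (2 * Real.sqrt k)) := by ring
        _ = (∑ i, |y i|) * (1 / (2 * Real.sqrt k)) := by
            rw [← Finset.sum_mul]
            congr 1
            apply Finset.sum_congr rfl
            intro i _
            simp only [hc, hd]
            rcases le_or_gt 0 (y i) with h | h
            · rw [max_eq_left h, max_eq_right (by linarith), abs_of_nonneg h]; ring
            · rw [max_eq_right (by linarith), max_eq_left (by linarith),
                abs_of_neg h]; ring
        _ ≤ (Real.sqrt k * ‖y‖) * (1 / (2 * Real.sqrt k)) := by
            apply mul_le_mul_of_nonneg_right (l1_le_sqrt_mul_norm k y)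
            positivity
        _ = ‖y‖ / 2 := by field_simp
  -- iterate the step
  choose f hf1 hf2 using step
  set y : ℕ → EuclideanSpace ℝ (Fin k) := fun n => Nat.rec (-x) (fun _ yn => yn - f yn) n with hy
  have hy0 : y 0 = -x := rfl
  have hysucc : ∀ n, y (n + 1) = y n - f (y n) := fun n => rfl
  have hcone : ∀ n, -x - y n ∈ convCone K := by
    intro n
    induction n with
    | zero => simpa [hy0] using convCone_zero K
    | succ n ih =>
      have : -x - y (n + 1) = (-x - y n) + f (y n) := by rw [hysucc]; abel
      rw [this]
      exact convCone_add ih (hf1 _)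
  have hnorm : ∀ n, ‖y n‖ ≤ (1 / 2) ^ n * ‖x‖ := by
    intro n
    induction n with
    | zero => simp [hy0]
    | succ n ih =>
      calc ‖y (n + 1)‖ = ‖y n - f (y n)‖ := by rw [hysucc]
        _ ≤ ‖y n‖ / 2 := hf2 _
        _ ≤ ((1 / 2) ^ n * ‖x‖) / 2 := by linarith
        _ = (1 / 2) ^ (n + 1) * ‖x‖ := by ring
  -- conclude
  rw [Metric.mem_closure_iff]
  intro ε hε
  have hx1 : (0 : ℝ) < ‖x‖ + 1 := by positivity
  obtain ⟨n, hn⟩ := exists_pow_lt_of_lt_one (div_pos hε hx1) (by norm_num : (1 / 2 : ℝ) < 1)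
  refine ⟨-x - y n, hcone n, ?_⟩
  have hd : dist (-x) (-x - y n) = ‖y n‖ := by rw [dist_eq_norm]; simp
  rw [hd]
  have hpn : (0 : ℝ) ≤ (1 / 2 : ℝ) ^ n := by positivity
  calc ‖y n‖ ≤ (1 / 2) ^ n * ‖x‖ := hnorm n
    _ ≤ (1 / 2) ^ n * (‖x‖ + 1) := by nlinarith
    _ < ε := by
        rw [← lt_div_iff₀ hx1] at *
        exact hn
end

section
/- Every compact set K ⊆ ℝ^k within Hausdorff distance 1/2 of the singleton {ξ₁} (where ξ₁ is the first standard basis vector) fails to be strongly positively dependent. -/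
lemma abs_coord_le_norm {k : ℕ} (y : EuclideanSpace ℝ (Fin k)) (i : Fin k) :
    |y i| ≤ ‖y‖ := by
  rw [EuclideanSpace.norm_eq]
  rw [← Real.sqrt_sq_eq_abs]
  apply Real.sqrt_le_sqrt
  exact Finset.single_le_sum (f := fun j => ‖y j‖ ^ 2)
    (fun j _ => by positivity) (Finset.mem_univ i) |>.trans_eq rfl
    |>.trans_eq' (by rw [Real.norm_eq_abs, sq_abs])

theorem stmt9 (k : ℕ) (hk : 0 < k)
    (K : Set (EuclideanSpace ℝ (Fin k))) (hKc : IsCompact K) (hKne : K.Nonempty)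
    (hK : Metric.hausdorffDist K {EuclideanSpace.single (⟨0, hk⟩ : Fin k) (1 : ℝ)} < 1 / 2) :
    ∃ x ∈ K, -x ∉ closure (convCone K) := by
  set i0 : Fin k := ⟨0, hk⟩
  set e : EuclideanSpace ℝ (Fin k) := EuclideanSpace.single i0 (1 : ℝ)
  have hedist : EMetric.hausdorffEdist K {e} ≠ ⊤ :=
    Metric.hausdorffEdist_ne_top_of_nonempty_of_bounded hKne
      (Set.singleton_nonempty e) hKc.isBounded Bornology.isBounded_singleton
  -- every y ∈ K has first coordinate > 1/2
  have hpos : ∀ y ∈ K, (1:ℝ)/2 < y i0 := by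
    intro y hy
    have h1 : Metric.infDist y {e} ≤ Metric.hausdorffDist K {e} :=
      Metric.infDist_le_hausdorffDist_of_mem hy hedist
    rw [Metric.infDist_singleton] at h1
    have h2 : dist y e < 1/2 := lt_of_le_of_lt h1 hK
    have h3 : |y i0 - 1| ≤ dist y e := by
      have := abs_coord_le_norm (y - e) i0
      simpa [e, dist_eq_norm, EuclideanSpace.single_apply] using this
    have := abs_sub_lt_iff.mp (lt_of_le_of_lt h3 h2)
    linarith [this.2]
  -- the cone is contained in the closed half-space
  have hcone : closure (convCone K) ⊆ {z : EuclideanSpace ℝ (Fin k) | 0 ≤ z i0} := by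
    apply closure_minimal
    · rintro z ⟨n, c, v, hc, hv, rfl⟩
      have : (∑ i, c i • v i) i0 = ∑ i, c i * (v i) i0 := by
        rw [show ((∑ i, c i • v i) i0) = (∑ i, (c i • v i)) i0 from rfl]
        rw [WithLp.ofLp_sum, Finset.sum_apply]
        rfl
      simp only [Set.mem_setOf_eq, this]
      exact Finset.sum_nonneg fun i _ =>
        mul_nonneg (hc i) (le_of_lt (lt_trans (by norm_num) (hpos (v i) (hv i))))
    · exact isClosed_le continuous_const ((EuclideanSpace.proj i0).continuous)
  obtain ⟨x, hx⟩ := hKne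
  refine ⟨x, hx, fun h => ?_⟩
  have h1 := hcone h
  have h2 := hpos x hx
  simp only [Set.mem_setOf_eq] at h1
  have : (-x) i0 = -(x i0) := rfl
  rw [this] at h1
  linarith
end
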